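/- Let n ≥ 2 and consider a dueling bandits instance with indifferences that is transitive (satisfying transitivity of strict preference, IP-transitivity, PI-transitivity, and transitivity of indifference) with a unique mode for every pair. Define the relation i ≽ j iff i strictly dominates j or i is indifferent to j. Then ≽ (together with equality) induces a total preorder on the arms, and every maximal element of this preorder is a Copeland winner. -/

import Mathlib

open Classical Finset in
theorem transitive_indiff_total_preorder {n : ℕ} (hn : 2 ≤ n)
    (Ps Pi Pp : Fin n → Fin n → ℝ)
    (hrange : ∀ i j, 0 ≤ Ps i j ∧ 0 ≤ Pi i j ∧ 0 ≤ Pp i j)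
    (hsum : ∀ i j, i ≠ j → Ps i j + Pi i j + Pp i j = 1)
    (hcons1 : ∀ i j, i ≠ j → Ps j i = Pp i j)
    (hcons2 : ∀ i j, i ≠ j → Pi j i = Pi i j)
    (hmode : ∀ i j, i ≠ j →
      (Ps i j > max (Pp i j) (Pi i j)) ∨ (Pi i j > max (Ps i j) (Pp i j)) ∨
        (Pp i j > max (Ps i j) (Pi i j)))
    (dom ind : Fin n → Fin n → Prop)
    (hdom : ∀ i j, dom i j ↔ i ≠ j ∧ Ps i j > max (Pp i j) (Pi i j))
    (hind : ∀ i j, ind i j ↔ i ≠ j ∧ Pi i j > max (Ps i j) (Pp i j))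
    -- the four transitivity conditions
    (h1 : ∀ i j k, dom i j → dom j k → i ≠ k → dom i k)
    (h2 : ∀ i j k, ind i j → dom j k → i ≠ k → dom i k)
    (h3 : ∀ i j k, dom i j → ind j k → i ≠ k → dom i k)
    (h4 : ∀ i j k, ind i j → ind j k → i ≠ k → ind i k)
    (CP : Fin n → ℝ)
    (hCP : ∀ i, CP i = ((univ.filter (fun k => dom i k)).card : ℝ)
        + (1 / 2) * ((univ.filter (fun k => ind i k)).card : ℝ))
    (R : Fin n → Fin n → Prop)
    (hR : ∀ i j, R i j ↔ (i = j ∨ dom i j ∨ ind i j)) :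
    (∀ i j k, R i j → R j k → R i k) ∧ (∀ i j, R i j ∨ R j i) ∧
      (∀ i : Fin n, (∀ k, R k i → R i k) → ∀ j, CP j ≤ CP i) := by
  have ind_symm : ∀ i j, ind i j → ind j i := by
    intro i j h
    rw [hind] at h ⊢
    obtain ⟨hne, hgt⟩ := h
    refine ⟨hne.symm, ?_⟩
    rw [hcons2 i j hne, hcons1 i j hne, ← hcons1 j i hne.symm, max_comm]
    exact hgt
  have dom_asymm : ∀ i j, dom i j → ¬ dom j i := by
    intro i j h h'
    rw [hdom] at h h'
    obtain ⟨hne, hgt⟩ := h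
    obtain ⟨hne', hgt'⟩ := h'
    rw [hcons1 i j hne, ← hcons1 j i hne'] at hgt'
    have := lt_of_le_of_lt (le_max_left (Pp i j) (Pi i j)) hgt
    have := lt_of_le_of_lt (le_max_left (Ps i j) (Pi j i)) hgt'
    linarith
  have dom_not_ind : ∀ i j, dom i j → ¬ ind i j := by
    intro i j h h'
    rw [hdom] at h
    rw [hind] at h'
    have := lt_of_le_of_lt (le_max_right (Pp i j) (Pi i j)) h.2
    have := lt_of_le_of_lt (le_max_left (Ps i j) (Pp i j)) h'.2
    linarith
  have dom_ne : ∀ i j, dom i j → i ≠ j := fun i j h => ((hdom i j).mp h).1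
  have ind_ne : ∀ i j, ind i j → i ≠ j := fun i j h => ((hind i j).mp h).1
  have trich : ∀ i j, i ≠ j → dom i j ∨ dom j i ∨ ind i j := by
    intro i j hne
    rcases hmode i j hne with h | h | h
    · exact Or.inl ((hdom i j).mpr ⟨hne, h⟩)
    · exact Or.inr (Or.inr ((hind i j).mpr ⟨hne, h⟩))
    · refine Or.inr (Or.inl ((hdom j i).mpr ⟨hne.symm, ?_⟩))
      rw [hcons1 i j hne, ← hcons1 j i hne.symm, hcons2 i j hne]
      exact h
  have Rtrans : ∀ i j k, R i j → R j k → R i k := by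
    intro i j k hij hjk
    rw [hR] at hij hjk ⊢
    rcases hij with rfl | hij
    · exact hjk
    rcases hjk with rfl | hjk
    · exact Or.inr hij
    by_cases hik : i = k
    · exact Or.inl hik
    rcases hij with hij | hij <;> rcases hjk with hjk | hjk
    · exact Or.inr (Or.inl (h1 i j k hij hjk hik))
    · exact Or.inr (Or.inl (h3 i j k hij hjk hik))
    · exact Or.inr (Or.inl (h2 i j k hij hjk hik))
    · exact Or.inr (Or.inr (h4 i j k hij hjk hik))
  refine ⟨Rtrans, ?_, ?_⟩
  · intro i j
    by_cases hij : i = j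
    · exact Or.inl ((hR i j).mpr (Or.inl hij))
    rcases trich i j hij with h | h | h
    · exact Or.inl ((hR i j).mpr (Or.inr (Or.inl h)))
    · exact Or.inr ((hR j i).mpr (Or.inr (Or.inl h)))
    · exact Or.inl ((hR i j).mpr (Or.inr (Or.inr h)))
  · intro i hmax j
    have hRij : R i j := by
      by_cases hij : i = j
      · exact (hR i j).mpr (Or.inl hij)
      rcases trich i j hij with h | h | h
      · exact (hR i j).mpr (Or.inr (Or.inl h))
      · exact hmax j ((hR j i).mpr (Or.inr (Or.inl h)))
      · exact (hR i j).mpr (Or.inr (Or.inr h))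
    have hIi0 : (0 : ℝ) ≤ ((univ.filter (fun k => ind i k)).card : ℝ) := Nat.cast_nonneg _
    rcases (hR i j).mp hRij with rfl | hd | hi
    · exact le_refl _
    · -- dom i j case
      have hsub : insert j ((univ.filter (fun k => dom j k)) ∪
          (univ.filter (fun k => ind j k))) ⊆ univ.filter (fun k => dom i k) := by
        intro k hk
        simp only [Finset.mem_insert, Finset.mem_union, Finset.mem_filter,
          Finset.mem_univ, true_and] at hk ⊢
        rcases hk with rfl | hk | hk
        · exact hd
        · have hik : i ≠ k := by rintro rfl; exact dom_asymm j i hk hd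
          exact h1 i j k hd hk hik
        · have hik : i ≠ k := by
            rintro rfl; exact dom_not_ind i j hd (ind_symm j i hk)
          exact h3 i j k hd hk hik
      have hjnot : j ∉ (univ.filter (fun k => dom j k)) ∪ (univ.filter (fun k => ind j k)) := by
        simp only [Finset.mem_union, Finset.mem_filter, Finset.mem_univ, true_and]
        rintro (h | h)
        · exact dom_ne j j h rfl
        · exact ind_ne j j h rfl
      have hdisj : Disjoint (univ.filter (fun k => dom j k)) (univ.filter (fun k => ind j k)) := by
        rw [Finset.disjoint_left]
        intro k hk hk'
        simp only [Finset.mem_filter, Finset.mem_univ, true_and] at hk hk'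
        exact dom_not_ind j k hk hk'
      have hcard := Finset.card_le_card hsub
      rw [Finset.card_insert_of_notMem hjnot, Finset.card_union_of_disjoint hdisj] at hcard
      rw [hCP i, hCP j]
      have : ((univ.filter (fun k => dom j k)).card : ℝ)
          + ((univ.filter (fun k => ind j k)).card : ℝ) + 1
          ≤ ((univ.filter (fun k => dom i k)).card : ℝ) := by
        exact_mod_cast hcard
      have hIj0 : (0 : ℝ) ≤ ((univ.filter (fun k => ind j k)).card : ℝ) := Nat.cast_nonneg _
      linarith
    · -- ind i j case
      have hij : i ≠ j := ind_ne i j hi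
      have hsubD : (univ.filter (fun k => dom j k)) ⊆ (univ.filter (fun k => dom i k)) := by
        intro k hk
        simp only [Finset.mem_filter, Finset.mem_univ, true_and] at hk ⊢
        have hik : i ≠ k := by
          rintro rfl; exact dom_not_ind j i hk (ind_symm i j hi)
        exact h2 i j k hi hk hik
      have hcardD := Finset.card_le_card hsubD
      have hcardI : (univ.filter (fun k => ind j k)).card ≤
          (univ.filter (fun k => ind i k)).card := by
        apply Finset.card_le_card_of_injOn (fun k => if k = i then j else k)
        · intro k hk
          simp only [Finset.mem_coe, Finset.mem_filter, Finset.mem_univ, true_and] at hk ⊢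
          by_cases hki : k = i
          · simp only [hki, if_pos rfl]; exact hi
          · simp only [if_neg hki]
            exact h4 i j k hi hk (Ne.symm hki)
        · intro a ha b hb hab
          simp only [Finset.mem_coe, Finset.mem_filter, Finset.mem_univ, true_and] at ha hb
          by_cases hai : a = i <;> by_cases hbi : b = i
          · rw [hai, hbi]
          · simp only [if_pos hai, if_neg hbi] at hab
            exact absurd hb (by rw [← hab]; exact fun h => ind_ne j j h rfl)
          · simp only [if_neg hai, if_pos hbi] at hab
            exact absurd ha (by rw [hab]; exact fun h => ind_ne j j h rfl)
          · simpa [if_neg hai, if_neg hbi] using hab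
      rw [hCP i, hCP j]
      have hD : ((univ.filter (fun k => dom j k)).card : ℝ)
          ≤ ((univ.filter (fun k => dom i k)).card : ℝ) := by exact_mod_cast hcardD
      have hI : ((univ.filter (fun k => ind j k)).card : ℝ)
          ≤ ((univ.filter (fun k => ind i k)).card : ℝ) := by exact_mod_cast hcardI
      linarith
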